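/- Let M be a smooth manifold, Ω ⊆ M an open subset, and φ ∈ C^∞(M) with φ ≥ 0 and φ = 0 on the topological boundary ∂Ω. Then for every complex number s with Re s > k, the function χ_Ω · φ^s (equal to φ(x)^s for x ∈ Ω and to 0 outside Ω) is of class C^k on M. -/

import Mathlib

open scoped Manifold Classical
open Filter Asymptotics Set Topology

section AuxStmt1
variable {E : Type*} [NormedAddCommGroup E] [NormedSpace ℝ E]
  {U W : Set E} {g : E → ℝ}

set_option linter.unusedSectionVars false
set_option linter.unusedVariables false
set_option linter.unnecessarySimpa false
set_option linter.unreachableTactic false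
set_option linter.unusedTactic false

private lemma norm_ite_cpow_le {s : ℂ} (hs : s.re ≠ 0) {r : ℝ} (hr : 0 ≤ r)
    (b : Prop) [Decidable b] : ‖if b then ((r : ℂ)) ^ s else 0‖ ≤ r ^ s.re := by
  split
  · exact le_of_eq (Complex.norm_cpow_eq_rpow_re_of_nonneg hr hs)
  · simpa using Real.rpow_nonneg hr _


private lemma continuousAt_zero_pt (hU : IsOpen U) (hg0 : ∀ y ∈ U, 0 ≤ g y)
    (hgc : ContinuousOn g U) {s : ℂ} (hs : 0 < s.re) {y : E} (hyU : y ∈ U) (hgy : g y = 0) :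
    ContinuousAt (fun z => if z ∈ W then ((g z : ℂ)) ^ s else 0) y := by
  have hs0 : s ≠ 0 := fun h => by simp [h] at hs
  have hFy : (if y ∈ W then ((g y : ℂ)) ^ s else 0) = 0 := by
    split <;> simp [hgy, Complex.zero_cpow hs0]
  have hb : ∀ᶠ z in 𝓝 y, ‖if z ∈ W then ((g z : ℂ)) ^ s else 0‖ ≤ g z ^ s.re := by
    filter_upwards [hU.mem_nhds hyU] with z hz
    exact norm_ite_cpow_le (ne_of_gt hs) (hg0 z hz) _
  have ht : Tendsto (fun z => g z ^ s.re) (𝓝 y) (𝓝 0) := by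
    have h1 : ContinuousAt g y := hgc.continuousAt (hU.mem_nhds hyU)
    have h2 := (Real.continuousAt_rpow_const (g y) s.re (Or.inr hs.le)).comp h1
    simpa [ContinuousAt, hgy, Real.zero_rpow (ne_of_gt hs), Function.comp_def] using h2
  rw [ContinuousAt, hFy]
  exact squeeze_zero_norm' hb ht

private lemma hasFDerivAt_zero_pt (hU : IsOpen U) (hg0 : ∀ y ∈ U, 0 ≤ g y)
    {s : ℂ} (hs : 1 < s.re) {y : E} (hyU : y ∈ U) (hgy : g y = 0)
    (hdg : DifferentiableAt ℝ g y) :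
    HasFDerivAt (fun z => if z ∈ W then ((g z : ℂ)) ^ s else 0) (0 : E →L[ℝ] ℂ) y := by
  have hs0 : s ≠ 0 := fun h => by simp [h] at hs; linarith
  have hsre : (0 : ℝ) < s.re := by linarith
  have hFy : (if y ∈ W then ((g y : ℂ)) ^ s else 0) = 0 := by
    split <;> simp [hgy, Complex.zero_cpow hs0]
  set D := fderiv ℝ g y with hD
  set C := ‖D‖ + 1 with hC
  have hCpos : (0 : ℝ) < C := by positivity
  have hgle : ∀ᶠ z in 𝓝 y, g z ≤ C * ‖z - y‖ := by
    have h1 := (HasFDerivAt.isLittleO hdg.hasFDerivAt).def one_pos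
    filter_upwards [h1] with z hz
    rw [← hD] at hz
    have h2 : g z - g y - D (z - y) ≤ ‖g z - g y - D (z - y)‖ :=
      (Real.norm_eq_abs _ ▸ le_abs_self _)
    have h3 : D (z - y) ≤ ‖D‖ * ‖z - y‖ :=
      (Real.norm_eq_abs _ ▸ le_abs_self _).trans (D.le_opNorm _)
    rw [hgy] at h2 hz
    rw [one_mul] at hz
    calc g z = (g z - 0 - D (z - y)) + D (z - y) := by ring
      _ ≤ ‖g z - 0 - D (z - y)‖ + ‖D‖ * ‖z - y‖ := add_le_add h2 h3
      _ ≤ ‖z - y‖ + ‖D‖ * ‖z - y‖ := by gcongr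
      _ = C * ‖z - y‖ := by rw [hC]; ring
  have hnorm : Tendsto (fun z : E => ‖z - y‖) (𝓝 y) (𝓝 0) := by
    have := (continuous_id.sub (continuous_const (y := y))).norm.tendsto y
    simpa using this
  have h2 : Tendsto (fun z : E => ‖z - y‖ ^ (s.re - 1)) (𝓝 y) (𝓝 0) := by
    have h3 := (Real.continuousAt_rpow_const 0 (s.re - 1)
      (Or.inr (by linarith))).tendsto.comp hnorm
    simpa [Real.zero_rpow (by linarith : s.re - 1 ≠ 0), Function.comp_def] using h3
  have htend : Tendsto (fun z : E => C ^ s.re * ‖z - y‖ ^ (s.re - 1)) (𝓝 y) (𝓝 0) := by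
    simpa using h2.const_mul (C ^ s.re)
  refine HasFDerivAt.of_isLittleO ?_
  rw [hFy]
  simp only [ContinuousLinearMap.zero_apply, sub_zero]
  rw [isLittleO_iff]
  intro c hc
  filter_upwards [hgle, htend.eventually (gt_mem_nhds hc), hU.mem_nhds hyU] with z hz1 hz2 hz3
  have hb : ‖if z ∈ W then ((g z : ℂ)) ^ s else 0‖ ≤ g z ^ s.re :=
    norm_ite_cpow_le (ne_of_gt hsre) (hg0 z hz3) _
  by_cases hzy : z = y
  · subst hzy
    simpa [hFy] using by positivity
  · have hpos : (0 : ℝ) < ‖z - y‖ := by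
      simpa [sub_eq_zero] using hzy
    have h4 : g z ^ s.re ≤ (C * ‖z - y‖) ^ s.re :=
      Real.rpow_le_rpow (hg0 z hz3) hz1 hsre.le
    have h5 : (C * ‖z - y‖) ^ s.re = C ^ s.re * (‖z - y‖ ^ (s.re - 1) * ‖z - y‖) := by
      rw [Real.mul_rpow hCpos.le (norm_nonneg _)]
      congr 1
      nth_rewrite 1 [show s.re = (s.re - 1) + 1 by ring]
      rw [Real.rpow_add hpos, Real.rpow_one]
    calc ‖if z ∈ W then ((g z : ℂ)) ^ s else 0‖ ≤ g z ^ s.re := hb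
      _ ≤ (C * ‖z - y‖) ^ s.re := h4
      _ = (C ^ s.re * ‖z - y‖ ^ (s.re - 1)) * ‖z - y‖ := by rw [h5]; ring
      _ ≤ c * ‖z - y‖ := mul_le_mul_of_nonneg_right hz2.le (norm_nonneg _)

private lemma not_mem_closure_of_ne (hW : IsOpen W)
    (hfr : ∀ y ∈ U, y ∈ frontier W → g y = 0)
    {y : E} (hyU : y ∈ U) (hyW : y ∉ W) (hgy : g y ≠ 0) : y ∉ closure W := by
  intro hyc
  rcases (closure_eq_self_union_frontier W ▸ hyc) with h | h
  · exact hyW h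
  · exact hgy (hfr y hyU h)

private lemma continuousAt_all (hU : IsOpen U) (hW : IsOpen W) (hWU : W ⊆ U)
    (hg0 : ∀ y ∈ U, 0 ≤ g y) (hgc : ContinuousOn g U)
    (hfr : ∀ y ∈ U, y ∈ frontier W → g y = 0)
    {s : ℂ} (hs : 0 < s.re) {y : E} (hyU : y ∈ U) :
    ContinuousAt (fun z => if z ∈ W then ((g z : ℂ)) ^ s else 0) y := by
  by_cases hgy : g y = 0
  · exact continuousAt_zero_pt hU hg0 hgc hs hyU hgy
  by_cases hyW : y ∈ W
  · have hpos : 0 < g y := lt_of_le_of_ne (hg0 y hyU) (Ne.symm hgy)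
    have h1 : ContinuousAt (fun z => ((g z : ℂ)) ^ s) y := by
      have hc : ContinuousAt (fun z => ((g z : ℝ) : ℂ)) y :=
        Complex.continuous_ofReal.continuousAt.comp (hgc.continuousAt (hU.mem_nhds hyU))
      exact ContinuousAt.comp (x := y) (f := fun z => ((g z : ℝ) : ℂ))
        (continuousAt_cpow_const (Complex.ofReal_mem_slitPlane.mpr hpos)) hc
    refine h1.congr ?_
    filter_upwards [hW.mem_nhds hyW] with z hz
    rw [if_pos hz]
  · have hyc : y ∉ closure W := not_mem_closure_of_ne hW hfr hyU hyW hgy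
    have : ∀ᶠ z in 𝓝 y, (if z ∈ W then ((g z : ℂ)) ^ s else 0) = 0 := by
      filter_upwards [isClosed_closure.isOpen_compl.mem_nhds hyc] with z hz
      rw [if_neg fun h => hz (subset_closure h)]
    exact continuousAt_const.congr (by filter_upwards [this] with z hz using hz.symm)

private lemma aux_contDiffAt (hU : IsOpen U) (hW : IsOpen W) (hWU : W ⊆ U)
    (hg : ContDiffOn ℝ (⊤ : ℕ∞) g U) (hg0 : ∀ y ∈ U, 0 ≤ g y)
    (hfr : ∀ y ∈ U, y ∈ frontier W → g y = 0) :
    ∀ (k : ℕ) (s : ℂ), (k : ℝ) < s.re → ∀ y ∈ U,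
      ContDiffAt ℝ k (fun z => if z ∈ W then ((g z : ℂ)) ^ s else 0) y := by
  intro k
  induction k with
  | zero =>
    intro s hs y hyU
    have h0 : (0 : ℝ) < s.re := by exact_mod_cast hs
    refine contDiffAt_zero.mpr ⟨U, hU.mem_nhds hyU, fun z hz => ?_⟩
    exact (continuousAt_all hU hW hWU hg0 hg.continuousOn hfr h0 hz).continuousWithinAt
  | succ k ih =>
    intro s hs y₀ hy₀
    have hk1 : ((k : ℝ) + 1) < s.re := by push_cast at hs ⊢; linarith
    have hs1 : (1 : ℝ) < s.re := by
      have : (0 : ℝ) ≤ k := Nat.cast_nonneg k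
      linarith
    have hs0 : s ≠ 0 := fun h => by rw [h] at hs1; simp at hs1; linarith
    have hsm1 : s - 1 ≠ 0 := by
      intro h
      have : s = 1 := by linear_combination h
      rw [this] at hs1; simp at hs1
    have hdiff : ∀ y ∈ U, DifferentiableAt ℝ g y := fun y hy =>
      (hg.contDiffAt (hU.mem_nhds hy)).differentiableAt (by simp)
    have hcast : ((k + 1 : ℕ) : WithTop ℕ∞) = (k : WithTop ℕ∞) + 1 := by push_cast; rfl
    rw [hcast]
    refine contDiffAt_succ_iff_hasFDerivAt.mpr
      ⟨fun y => (fderiv ℝ g y).smulRight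
        (s * (if y ∈ W then ((g y : ℂ)) ^ (s - 1) else 0)), ⟨U, hU.mem_nhds hy₀, ?_⟩, ?_⟩
    · intro y hy
      by_cases hgy : g y = 0
      · have hf'0 : ((fderiv ℝ g y).smulRight
            (s * (if y ∈ W then ((g y : ℂ)) ^ (s - 1) else 0))) = 0 := by
          have : (if y ∈ W then ((g y : ℂ)) ^ (s - 1) else 0) = 0 := by
            split <;> simp [hgy, Complex.zero_cpow hsm1]
          rw [this, mul_zero]
          ext v
          simp
        beta_reduce
        rw [hf'0]
        exact hasFDerivAt_zero_pt hU hg0 hs1 hy hgy (hdiff y hy)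
      by_cases hyW : y ∈ W
      · have hpos : 0 < g y := lt_of_le_of_ne (hg0 y (hWU hyW)) (Ne.symm hgy)
        have hdg := (hdiff y hy).hasFDerivAt
        have hofr : HasFDerivAt (fun z => ((g z : ℝ) : ℂ))
            (Complex.ofRealCLM.comp (fderiv ℝ g y)) y :=
          Complex.ofRealCLM.hasFDerivAt.comp y hdg
        have hcpow : HasDerivAt (fun w : ℂ => w ^ s)
            (s * ((g y : ℂ)) ^ (s - 1)) ((g y : ℝ) : ℂ) :=
          (Complex.hasStrictDerivAt_cpow_const
            (Complex.ofReal_mem_slitPlane.mpr hpos)).hasDerivAt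
        have h1 : HasFDerivAt (fun z => ((g z : ℂ)) ^ s)
            ((s * ((g y : ℂ)) ^ (s - 1)) • (Complex.ofRealCLM.comp (fderiv ℝ g y))) y :=
          hcpow.comp_hasFDerivAt (h₂ := fun w : ℂ => w ^ s) y hofr
        have heq : ((s * ((g y : ℂ)) ^ (s - 1)) • (Complex.ofRealCLM.comp (fderiv ℝ g y)))
            = (fderiv ℝ g y).smulRight
              (s * (if y ∈ W then ((g y : ℂ)) ^ (s - 1) else 0)) := by
          rw [if_pos hyW]
          ext v
          simp [Complex.real_smul]
          ring
        beta_reduce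
        rw [← heq]
        refine h1.congr_of_eventuallyEq ?_
        filter_upwards [hW.mem_nhds hyW] with z hz
        rw [if_pos hz]
      · have hyc : y ∉ closure W := not_mem_closure_of_ne hW hfr hy hyW hgy
        have hf'0 : ((fderiv ℝ g y).smulRight
            (s * (if y ∈ W then ((g y : ℂ)) ^ (s - 1) else 0))) = 0 := by
          rw [if_neg hyW, mul_zero]
          ext v
          simp
        beta_reduce
        rw [hf'0]
        refine (hasFDerivAt_const (0 : ℂ) y).congr_of_eventuallyEq ?_
        filter_upwards [isClosed_closure.isOpen_compl.mem_nhds hyc] with z hz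
        rw [if_neg fun h => hz (subset_closure h)]
    · have h1 : ContDiffAt ℝ k (fderiv ℝ g) y₀ :=
        (hg.contDiffAt (hU.mem_nhds hy₀)).fderiv_right (by exact_mod_cast le_top)
      have h2 : ContDiffAt ℝ k
          (fun y => if y ∈ W then ((g y : ℂ)) ^ (s - 1) else 0) y₀ := by
        refine ih (s - 1) ?_ y₀ hy₀
        rw [Complex.sub_re, Complex.one_re]
        push_cast at hs
        linarith
      exact h1.smulRight (contDiffAt_const.mul h2)
end AuxStmt1

/-- Let`M` be a smooth manifold (modelled on a real normed space `E`), `Ω ⊆ M` open and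
`φ ∈ C^∞(M)` with `φ ≥ 0` and `φ = 0` on the topological boundary `∂Ω`.  Then for every
complex number `s` with `Re s > k`, the function `χ_Ω · φ^s` (equal to `φ(x)^s` on `Ω`
and to `0` outside `Ω`) is of class `C^k` on `M`. -/
theorem stmt1 {E : Type*} [NormedAddCommGroup E] [NormedSpace ℝ E]
    {M : Type*} [TopologicalSpace M] [ChartedSpace E M]
    [IsManifold (modelWithCornersSelf ℝ E) (⊤ : ℕ∞) M]
    (Ω : Set M) (hΩ : IsOpen Ω) (φ : M → ℝ)
    (hφ : ContMDiff (modelWithCornersSelf ℝ E) (modelWithCornersSelf ℝ ℝ) (⊤ : ℕ∞) φ)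
    (hφ0 : ∀ x, 0 ≤ φ x) (hbd : ∀ x ∈ frontier Ω, φ x = 0)
    (k : ℕ) (s : ℂ) (hs : (k : ℝ) < s.re) :
    ContMDiff (modelWithCornersSelf ℝ E) (modelWithCornersSelf ℝ ℂ) k
      (fun x => if x ∈ Ω then (φ x : ℂ) ^ s else 0) := by
  intro x
  have hs' := hs
  set e := extChartAt (modelWithCornersSelf ℝ E) x with he
  have hUopen : IsOpen e.target := isOpen_extChartAt_target x
  set W : Set E := e.target ∩ e.symm ⁻¹' Ω with hWdef
  have hWopen : IsOpen W :=
    (continuousOn_extChartAt_symm x).isOpen_inter_preimage hUopen hΩ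
  have hWU : W ⊆ e.target := inter_subset_left
  have hgsm : ContDiffOn ℝ (⊤ : ℕ∞) (φ ∘ e.symm) e.target := by
    have h1 : ContMDiffOn (modelWithCornersSelf ℝ E) (modelWithCornersSelf ℝ ℝ) (⊤ : ℕ∞) (φ ∘ e.symm) e.target :=
      hφ.comp_contMDiffOn (contMDiffOn_extChartAt_symm x)
    exact contMDiffOn_iff_contDiffOn.mp h1
  have hg0 : ∀ y ∈ e.target, 0 ≤ (φ ∘ e.symm) y := fun y _ => hφ0 _
  have hfr : ∀ y ∈ e.target, y ∈ frontier W → (φ ∘ e.symm) y = 0 := by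
    intro y hyU hyfr
    have hyW : y ∉ W := fun h => (hWopen.frontier_eq ▸ hyfr).2 h
    have hycl : y ∈ closure W := hyfr.1
    have h1 : e.symm y ∈ closure Ω := by
      refine ContinuousWithinAt.mem_closure ?_ hycl ?_
      · exact ((continuousOn_extChartAt_symm x).continuousAt
          (hUopen.mem_nhds hyU)).continuousWithinAt
      · exact fun z hz => hz.2
    have h2 : e.symm y ∉ Ω := fun h => hyW ⟨hyU, h⟩
    exact hbd _ (hΩ.frontier_eq ▸ ⟨h1, h2⟩)
  have key := aux_contDiffAt hUopen hWopen hWU hgsm hg0 hfr k s hs (e x)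
    (mem_extChartAt_target x)
  have heq : ∀ y ∈ e.target,
      (if e.symm y ∈ Ω then ((φ (e.symm y) : ℝ) : ℂ) ^ s else 0)
        = (@ite ℂ (y ∈ W) (Classical.propDecidable _) ((((φ ∘ e.symm) y : ℝ) : ℂ) ^ s) 0) := by
    intro y hy
    by_cases h : e.symm y ∈ Ω
    · rw [if_pos h, if_pos ⟨hy, h⟩]; rfl
    · rw [if_neg h, if_neg (fun hc => h hc.2)]
  have key2 : ContDiffAt ℝ k
      (fun y => if e.symm y ∈ Ω then ((φ (e.symm y) : ℝ) : ℂ) ^ s else 0) (e x) := by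
    refine key.congr_of_eventuallyEq ?_
    filter_upwards [hUopen.mem_nhds (mem_extChartAt_target x)] with y hy
    exact heq y hy
  have hcontf : ContinuousAt (fun x' => if x' ∈ Ω then ((φ x' : ℝ) : ℂ) ^ s else 0) x := by
    have h1 : ContinuousAt ((fun y => if e.symm y ∈ Ω then ((φ (e.symm y) : ℝ) : ℂ) ^ s
        else 0) ∘ e) x := key2.continuousAt.comp (continuousAt_extChartAt (I := modelWithCornersSelf ℝ E) x)
    refine h1.congr ?_
    filter_upwards [(isOpen_extChartAt_source (I := modelWithCornersSelf ℝ E) x).mem_nhds (mem_extChartAt_source (I := modelWithCornersSelf ℝ E) x)] with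
      x' hx'
    simp only [Function.comp_apply, e.left_inv hx']
  rw [contMDiffAt_iff]
  refine ⟨hcontf, ?_⟩
  simp only [extChartAt_model_space_eq_id, PartialEquiv.refl_coe, id_eq, Function.comp_def,
    modelWithCornersSelf_coe, range_id]
  rw [contDiffWithinAt_univ]
  exact_mod_cast key2
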